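/- Let R_1, …, R_n be pairwise disjoint closed axis-aligned rectangles in ℝ² whose bottom-left vertices (a_m,c_m) satisfy a_1 < a_2 < … < a_n and c_1 > c_2 > … > c_n, and let i ≤ j be such that every R_s with i ≤ s ≤ j is a sink of the dependency graph G(R). Let R* be the smallest closed axis-aligned rectangle containing R_i ∪ R_j. Then R_s ⊆ R* for every s with i ≤ s ≤ j, and R* ∩ R_m = ∅ for every m with m < i or m > j. -/

import Mathlib

open Set

/-- `R j` is vertically visible from `R i`: there is a vertical closed segment with one
endpoint in `R i` and the other in `R j` that meets no third region. -/
def VertVis {n : ℕ} (R : Fin n → Set (ℝ × ℝ)) (i j : Fin n) : Prop :=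
  ∃ x y₁ y₂ : ℝ, (x, y₁) ∈ R i ∧ (x, y₂) ∈ R j ∧
    ∀ t ∈ Set.uIcc y₁ y₂, ∀ m : Fin n, m ≠ i → m ≠ j → (x, t) ∉ R m

/-- `R j` is horizontally visible from `R i`: there is a horizontal closed segment with one
endpoint in `R i` and the other in `R j` that meets no third region. -/
def HorVis {n : ℕ} (R : Fin n → Set (ℝ × ℝ)) (i j : Fin n) : Prop :=
  ∃ y x₁ x₂ : ℝ, (x₁, y) ∈ R i ∧ (x₂, y) ∈ R j ∧
    ∀ t ∈ Set.uIcc x₁ x₂, ∀ m : Fin n, m ≠ i → m ≠ j → (t, y) ∉ R m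

/-- A vertical arrow from `R i` to `R j` in the dependency graph `G(R)`. -/
def VertArrow {n : ℕ} (R : Fin n → Set (ℝ × ℝ)) (i j : Fin n) : Prop :=
  i < j ∧ VertVis R i j

/-- A horizontal arrow from `R i` to `R j` in the dependency graph `G(R)`. -/
def HorArrow {n : ℕ} (R : Fin n → Set (ℝ × ℝ)) (i j : Fin n) : Prop :=
  j < i ∧ HorVis R i j

/-- An arrow from `R i` to `R j` in the dependency graph `G(R)`. -/
def Arrow {n : ℕ} (R : Fin n → Set (ℝ × ℝ)) (i j : Fin n) : Prop :=
  VertArrow R i j ∨ HorArrow R i j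

section Aux
variable {n : ℕ} {a b c d : Fin n → ℝ} {R : Fin n → Set (ℝ × ℝ)}

lemma memR (hR : ∀ m, R m = Icc (a m) (b m) ×ˢ Icc (c m) (d m)) {m : Fin n} {x y : ℝ} :
    (x, y) ∈ R m ↔ (a m ≤ x ∧ x ≤ b m) ∧ (c m ≤ y ∧ y ≤ d m) := by
  rw [hR]; simp only [Set.mem_prod, Set.mem_Icc]

/-- No rectangle with overlapping x-range lies strictly below a sink. -/
lemma no_below (hcd : ∀ m, c m ≤ d m)
    (hR : ∀ m, R m = Icc (a m) (b m) ×ˢ Icc (c m) (d m))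
    (hdisj : ∀ i j : Fin n, i ≠ j → Disjoint (R i) (R j))
    (hc : StrictAnti c)
    {s : Fin n} (hs : ∀ m, ¬ Arrow R s m)
    {m : Fin n} (hm : m ≠ s) {x : ℝ}
    (hxs : a s ≤ x) (hxs' : x ≤ b s) (hxm : a m ≤ x) (hxm' : x ≤ b m)
    (hbelow : d m < c s) : False := by
  classical
  set S : Finset (Fin n) :=
    Finset.univ.filter (fun k => k ≠ s ∧ a k ≤ x ∧ x ≤ b k ∧ d k < c s) with hS
  have hmS : m ∈ S := by simp [hS, hm, hxm, hxm', hbelow]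
  obtain ⟨k, hkS, hkmax⟩ := S.exists_max_image d ⟨m, hmS⟩
  simp only [hS, Finset.mem_filter, Finset.mem_univ, true_and] at hkS
  obtain ⟨hks, hak, hbk, hdk⟩ := hkS
  have hck : c k < c s := lt_of_le_of_lt (hcd k) hdk
  have hsk : s < k := hc.lt_iff_gt.mp hck
  apply hs k
  left
  refine ⟨hsk, x, c s, d k, ?_, ?_, ?_⟩
  · exact (memR hR).mpr ⟨⟨hxs, hxs'⟩, le_refl _, hcd s⟩
  · exact (memR hR).mpr ⟨⟨hak, hbk⟩, hcd k, le_refl _⟩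
  · intro t ht l hls hlk hmem
    rw [Set.uIcc_of_ge hdk.le] at ht
    obtain ⟨⟨hal, hbl⟩, hcl, hdl⟩ := (memR hR).mp hmem
    have hdls : d l < c s := by
      by_contra h
      push_neg at h
      exact Set.disjoint_left.mp (hdisj l s hls)
        ((memR hR).mpr ⟨⟨hal, hbl⟩, le_trans hcl ht.2, h⟩)
        ((memR hR).mpr ⟨⟨hxs, hxs'⟩, le_refl _, hcd s⟩)
    have hlS : l ∈ S := by simp [hS, hls, hal, hbl, hdls]
    have h1 : d l ≤ d k := hkmax l hlS
    have h2 : t = d k := le_antisymm (le_trans hdl h1) ht.1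
    exact Set.disjoint_left.mp (hdisj l k hlk)
      ((memR hR).mpr ⟨⟨hal, hbl⟩, hcl.trans h2.le, h2.symm.le.trans hdl⟩)
      ((memR hR).mpr ⟨⟨hak, hbk⟩, hcd k, le_refl _⟩) 

/-- No rectangle with overlapping y-range lies strictly left of a sink. -/
lemma no_left (hab : ∀ m, a m ≤ b m)
    (hR : ∀ m, R m = Icc (a m) (b m) ×ˢ Icc (c m) (d m))
    (hdisj : ∀ i j : Fin n, i ≠ j → Disjoint (R i) (R j))
    (ha : StrictMono a)
    {s : Fin n} (hs : ∀ m, ¬ Arrow R s m)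
    {m : Fin n} (hm : m ≠ s) {y : ℝ}
    (hys : c s ≤ y) (hys' : y ≤ d s) (hym : c m ≤ y) (hym' : y ≤ d m)
    (hleft : b m < a s) : False := by
  classical
  set S : Finset (Fin n) :=
    Finset.univ.filter (fun k => k ≠ s ∧ c k ≤ y ∧ y ≤ d k ∧ b k < a s) with hS
  have hmS : m ∈ S := by simp [hS, hm, hym, hym', hleft]
  obtain ⟨k, hkS, hkmax⟩ := S.exists_max_image b ⟨m, hmS⟩
  simp only [hS, Finset.mem_filter, Finset.mem_univ, true_and] at hkS
  obtain ⟨hks, hck, hdk, hbk⟩ := hkS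
  have hak : a k < a s := lt_of_le_of_lt (hab k) hbk
  have hsk : k < s := ha.lt_iff_lt.mp hak
  apply hs k
  right
  refine ⟨hsk, y, a s, b k, ?_, ?_, ?_⟩
  · exact (memR hR).mpr ⟨⟨le_refl _, hab s⟩, hys, hys'⟩
  · exact (memR hR).mpr ⟨⟨hab k, le_refl _⟩, hck, hdk⟩
  · intro t ht l hls hlk hmem
    rw [Set.uIcc_of_ge hbk.le] at ht
    obtain ⟨⟨hal, hbl⟩, hcl, hdl⟩ := (memR hR).mp hmem
    have hbls : b l < a s := by
      by_contra h
      push_neg at h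
      exact Set.disjoint_left.mp (hdisj l s hls)
        ((memR hR).mpr ⟨⟨le_trans hal ht.2, h⟩, hcl, hdl⟩)
        ((memR hR).mpr ⟨⟨le_refl _, hab s⟩, hys, hys'⟩)
    have hlS : l ∈ S := by simp [hS, hls, hcl, hdl, hbls]
    have h1 : b l ≤ b k := hkmax l hlS
    have h2 : t = b k := le_antisymm (le_trans hbl h1) ht.1
    exact Set.disjoint_left.mp (hdisj l k hlk)
      ((memR hR).mpr ⟨⟨hal.trans h2.le, h2.symm.le.trans hbl⟩, hcl, hdl⟩)
      ((memR hR).mpr ⟨⟨hab k, le_refl _⟩, hck, hdk⟩)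

end Aux

/-- For a maximal sequence of sinks `[R i, R j]` of `G(R)` in an ordered
pairwise-disjoint family, the smallest rectangle `R*` containing `R i ∪ R j` contains every
`R s` with `i ≤ s ≤ j` and is disjoint from every `R m` with `m < i` or `m > j`. -/
theorem compound_region_contains_and_disjoint {n : ℕ} (a b c d : Fin n → ℝ)
    (hab : ∀ m, a m ≤ b m) (hcd : ∀ m, c m ≤ d m)
    (R : Fin n → Set (ℝ × ℝ))
    (hR : ∀ m, R m = Icc (a m) (b m) ×ˢ Icc (c m) (d m))
    (hdisj : ∀ i j : Fin n, i ≠ j → Disjoint (R i) (R j))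
    (ha : StrictMono a) (hc : StrictAnti c)
    (i j : Fin n) (hij : i ≤ j)
    (hsink : ∀ s, i ≤ s → s ≤ j → ∀ m, ¬ Arrow R s m)
    (Rstar : Set (ℝ × ℝ))
    (hRstar : Rstar = Icc (min (a i) (a j)) (max (b i) (b j)) ×ˢ
        Icc (min (c i) (c j)) (max (d i) (d j))) :
    (∀ s, i ≤ s → s ≤ j → R s ⊆ Rstar) ∧
      ∀ m, (m < i ∨ j < m) → Rstar ∩ R m = ∅ := by

  classical
  -- every rectangle with larger index is strictly right of a sink
  have hstepR : ∀ s, i ≤ s → s ≤ j → ∀ m : Fin n, s < m → b s < a m := by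
    intro s hsi hsj m hsm
    by_contra h
    push_neg at h
    have hxs : a s ≤ a m := (ha hsm).le
    -- y-ranges must be disjoint
    have hyd : d m < c s ∨ d s < c m := by
      by_contra hy
      push_neg at hy
      exact Set.disjoint_left.mp (hdisj s m hsm.ne)
        ((memR hR).mpr ⟨⟨hxs, h⟩, le_max_left _ _,
          max_le (hcd s) hy.2⟩)
        ((memR hR).mpr ⟨⟨le_refl _, hab m⟩, le_max_right _ _,
          max_le hy.1 (hcd m)⟩)
    rcases hyd with hyd | hyd
    · exact no_below hcd hR hdisj hc (hsink s hsi hsj) hsm.ne' hxs h (le_refl _) (hab m) hyd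
    · have : c m < c s := hc hsm
      linarith [hcd s]
  -- every rectangle with smaller index is strictly above a sink
  have hstepU : ∀ s, i ≤ s → s ≤ j → ∀ m : Fin n, m < s → d s < c m := by
    intro s hsi hsj m hms
    by_contra h
    push_neg at h
    have hys : c s ≤ c m := (hc hms).le
    -- x-ranges must be disjoint
    have hxd : b m < a s ∨ b s < a m := by
      by_contra hx
      push_neg at hx
      exact Set.disjoint_left.mp (hdisj s m hms.ne')
        ((memR hR).mpr ⟨⟨le_max_left _ _, max_le (hab s) hx.2⟩, hys, h⟩)
        ((memR hR).mpr ⟨⟨le_max_right _ _, max_le hx.1 (hab m)⟩, le_refl _, hcd m⟩)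
    rcases hxd with hxd | hxd
    · exact no_left hab hR hdisj ha (hsink s hsi hsj) hms.ne hys h (le_refl _) (hcd m) hxd
    · have : a m < a s := ha hms
      linarith [hab s]
  constructor
  · intro s hsi hsj
    rw [hR s, hRstar]
    apply Set.prod_mono
    · apply Set.Icc_subset_Icc
      · exact le_trans (min_le_left _ _) (ha.monotone hsi)
      · rcases eq_or_lt_of_le hsj with rfl | hlt
        · exact le_max_right _ _
        · exact le_trans (hstepR s hsi hsj j hlt).le
            (le_trans (hab j) (le_max_right _ _))
    · apply Set.Icc_subset_Icc
      · exact le_trans (min_le_right _ _) (hc.antitone hsj)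
      · rcases eq_or_lt_of_le hsi with rfl | hlt
        · exact le_max_left _ _
        · exact le_trans (hstepU s hsi hsj i hlt).le
            (le_trans (hcd i) (le_max_left _ _))
  · intro m hm
    rw [Set.eq_empty_iff_forall_notMem]
    rintro ⟨x, y⟩ ⟨hp1, hp2⟩
    rw [hRstar] at hp1
    obtain ⟨⟨_, hx2⟩, _, hy2⟩ := hp1
    obtain ⟨⟨hx3, _⟩, hy3, _⟩ := (memR hR).mp hp2
    rcases hm with hm | hm
    · -- m < i : R m strictly above Rstar
      have h1 : d i < c m := hstepU i le_rfl hij m hm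
      have h2 : d j < c m := hstepU j hij le_rfl m (lt_of_lt_of_le hm hij)
      have : y ≤ max (d i) (d j) := hy2
      rcases max_cases (d i) (d j) with ⟨he, _⟩ | ⟨he, _⟩ <;> rw [he] at this <;> linarith
    · -- j < m : R m strictly right of Rstar
      have h1 : b i < a m := hstepR i le_rfl hij m (lt_of_le_of_lt hij hm)
      have h2 : b j < a m := hstepR j hij le_rfl m hm
      have : x ≤ max (b i) (b j) := hx2
      rcases max_cases (b i) (b j) with ⟨he, _⟩ | ⟨he, _⟩ <;> rw [he] at this <;> linarith
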